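/- arXiv:2109.04365 — 5 statements merged into one kernel-verified Lean document; each statement's English description precedes it below -/
import Mathlib

section
/- Let a, b be nonzero complex numbers with sign(a) ≠ ± sign(b). Then |a|/|b| is uniquely determined by the three phases sign(a), sign(b), sign(a+b). Concretely, with c₁ = Im(sign(a)/sign(a+b)) and c₂ = Im(sign(b)/sign(a+b)), one has c₁ ≠ 0 and |a|/|b| = -c₂/c₁. -/
noncomputable def csign (z : ℂ) : ℂ := if z = 0 then 0 else z / (‖z‖ : ℂ)

lemma csign_ne (z : ℂ) (hz : z ≠ 0) : csign z = z / (‖z‖ : ℂ) := by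
  simp [csign, hz]

lemma csign_neg (z : ℂ) : csign (-z) = -csign z := by
  by_cases hz : z = 0
  · simp [hz, csign]
  · simp [csign_ne _ hz, csign_ne _ (neg_ne_zero.mpr hz), neg_div]

theorem stmt_1 (a b : ℂ) (ha : a ≠ 0) (hb : b ≠ 0)
    (h1 : csign a ≠ csign b) (h2 : csign a ≠ -csign b) :
    (csign a / csign (a + b)).im ≠ 0 ∧
      ‖a‖ / ‖b‖ =
        -((csign b / csign (a + b)).im) / ((csign a / csign (a + b)).im) := by
  have hs : a + b ≠ 0 := by
    intro h
    have hb' : b = -a := by linear_combination h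
    apply h2
    rw [hb', csign_neg, neg_neg]
  set s : ℂ := a + b with hsdef
  -- key: a/b is not real
  have hkey : (a / b).im ≠ 0 := by
    intro h
    set r : ℝ := (a / b).re with hr
    have hab : a / b = (r : ℂ) := Complex.ext rfl (by simpa using h)
    have har : a = (r : ℂ) * b := by
      field_simp at hab; linear_combination hab
    have hr0 : r ≠ 0 := by
      intro h0; rw [h0] at har; simp at har; exact ha har
    have hrC : (r : ℂ) ≠ 0 := by exact_mod_cast hr0
    have hcs : csign a = ((r : ℂ) / |r|) * csign b := by
      rw [csign_ne _ ha, har, csign_ne _ hb]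
      rw [norm_mul, Complex.norm_real, Real.norm_eq_abs]
      push_cast
      ring
    rcases lt_or_gt_of_ne hr0 with hneg | hpos
    · apply h2
      rw [hcs, abs_of_neg hneg]
      push_cast
      field_simp
    · apply h1
      rw [hcs, abs_of_pos hpos]
      field_simp
  -- b/s not real
  have hbs : (b / s).im ≠ 0 := by
    intro h
    set t : ℝ := (b / s).re with ht
    have hbt : b / s = (t : ℝ) := Complex.ext rfl (by simpa using h)
    have hbs' : b = (t : ℂ) * s := by
      field_simp at hbt; linear_combination hbt
    have ht0 : (t : ℂ) ≠ 0 := by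
      intro h0; rw [h0] at hbs'; simp at hbs'; exact hb hbs'
    have has' : a = (1 - (t : ℂ)) * s := by
      rw [hsdef] at hbs' ⊢; linear_combination -hbs'
    apply hkey
    have : a / b = (1 - (t : ℂ)) / t := by
      rw [has', hbs']
      field_simp
    rw [this]
    simp [Complex.div_im]
  have has : (a / s).im = -(b / s).im := by
    have h1' : a / s = 1 - b / s := by
      rw [eq_sub_iff_add_eq, ← add_div, hsdef, div_self hs]
    rw [h1']
    simp
  -- express the csign quotients
  have habs_s : (‖s‖ : ℝ) ≠ 0 := by
    simp [norm_ne_zero_iff]; exact hs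
  have habs_a : (‖a‖ : ℝ) ≠ 0 := by
    simp [norm_ne_zero_iff]; exact ha
  have habs_b : (‖b‖ : ℝ) ≠ 0 := by
    simp [norm_ne_zero_iff]; exact hb
  have hqa : csign a / csign s = (a / s) * ((‖s‖ / ‖a‖ : ℝ) : ℂ) := by
    rw [csign_ne _ ha, csign_ne _ hs]
    push_cast
    field_simp
  have hqb : csign b / csign s = (b / s) * ((‖s‖ / ‖b‖ : ℝ) : ℂ) := by
    rw [csign_ne _ hb, csign_ne _ hs]
    push_cast
    field_simp
  have hia : (csign a / csign s).im = (a / s).im * (‖s‖ / ‖a‖) := by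
    rw [hqa, Complex.mul_im]; simp
  have hib : (csign b / csign s).im = (b / s).im * (‖s‖ / ‖b‖) := by
    rw [hqb, Complex.mul_im]; simp
  constructor
  · rw [hia, has]
    intro h
    rcases mul_eq_zero.mp h with h' | h'
    · exact hbs (by linarith [neg_eq_zero.mp h'])
    · exact (div_ne_zero habs_s habs_a) h'
  · rw [hia, hib, has]
    field_simp
end

section
/- For every dimension d ≥ 1 there exists a measurement matrix A ∈ ℂ^{d²×d} such that for all x, y ∈ ℂ^d, if sign(Ax) = sign(Ay) (entrywise) then y = t·x for some real t > 0. In particular, the d² measurements {sign(x_k) : k ∈ [d]} together with {sign(x_k + x_l), sign(x_k + i·x_l) : 1 ≤ k < l ≤ d} determine x up to a positive scalar. -/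
lemma csign_eq_zero_iff (z : ℂ) : csign z = 0 ↔ z = 0 := by
  unfold csign
  split
  · simp_all
  · simp_all [div_eq_zero_iff]

lemma csign_rel {a b : ℂ} (ha : a ≠ 0) (h : csign a = csign b) :
    ∃ t : ℝ, 0 < t ∧ b = (t : ℂ) * a := by
  have hb : b ≠ 0 := by
    intro h0
    apply ha
    rw [← csign_eq_zero_iff, h, h0, (csign_eq_zero_iff 0).mpr rfl]
  unfold csign at h
  rw [if_neg ha, if_neg hb] at h
  have ha' : (‖a‖ : ℂ) ≠ 0 := by
    simp [norm_ne_zero_iff.mpr ha]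
  have hb' : (‖b‖ : ℂ) ≠ 0 := by
    simp [norm_ne_zero_iff.mpr hb]
  refine ⟨‖b‖ / ‖a‖, by
    apply div_pos <;> exact norm_pos_iff.mpr (by assumption), ?_⟩
  push_cast
  field_simp at h ⊢
  linear_combination -h

lemma key {a b : ℂ} (ha : a ≠ 0) (hb : b ≠ 0) {s t : ℝ} (hs : 0 < s) (ht : 0 < t)
    (h1 : csign (a + b) = csign ((s : ℂ) * a + (t : ℂ) * b))
    (h2 : csign (a + Complex.I * b) = csign ((s : ℂ) * a + (t : ℂ) * (Complex.I * b))) :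
    s = t := by
  have cast_st : ∀ u v : ℝ, ((u : ℂ) = (v : ℂ)) → u = v := fun u v h => by exact_mod_cast h
  by_cases hab : a + b = 0
  · -- b = -a
    have hb' : b = -a := by linear_combination hab
    have h0 : csign ((s : ℂ) * a + (t : ℂ) * b) = 0 := by
      rw [← h1, (csign_eq_zero_iff _).mpr hab]
    have h0' : ((s : ℂ) - t) * a = 0 := by
      have := (csign_eq_zero_iff _).mp h0
      linear_combination this - (t : ℂ) * hb'
    have : (s : ℂ) - t = 0 := by
      rcases mul_eq_zero.mp h0' with h | h
      · exact h
      · exact absurd h ha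
    have : (s : ℂ) = t := by linear_combination this
    exact_mod_cast this
  · obtain ⟨r, hr, hre⟩ := csign_rel hab h1
    have eq1 : ((s : ℂ) - r) * a = ((r : ℂ) - t) * b := by linear_combination hre
    by_cases hab2 : a + Complex.I * b = 0
    · have h0 : csign ((s : ℂ) * a + (t : ℂ) * (Complex.I * b)) = 0 := by
        rw [← h2, (csign_eq_zero_iff _).mpr hab2]
      have hib : Complex.I * b = -a := by linear_combination hab2
      have h0' : ((s : ℂ) - t) * a = 0 := by
        have := (csign_eq_zero_iff _).mp h0
        linear_combination this - (t : ℂ) * hib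
      have : (s : ℂ) = t := by
        rcases mul_eq_zero.mp h0' with h | h
        · linear_combination h
        · exact absurd h ha
      exact_mod_cast this
    · obtain ⟨r', hr', hre2⟩ := csign_rel hab2 h2
      have eq2 : ((s : ℂ) - r') * a = ((r' : ℂ) - t) * (Complex.I * b) := by
        linear_combination hre2
      by_cases hsr : s = r
      · have h0 : ((r : ℂ) - t) * b = 0 := by
          rw [← eq1, hsr]; ring
        have : (r : ℂ) = t := by
          rcases mul_eq_zero.mp h0 with h | h
          · linear_combination h
          · exact absurd h hb
        have : r = t := by exact_mod_cast this
        rw [hsr, this]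
      · set μ : ℝ := (r - t) / (s - r) with hμ
        have hsr0 : ((s - r : ℝ) : ℂ) ≠ 0 := by
          exact_mod_cast sub_ne_zero.mpr hsr
        have ha_eq : a = (μ : ℂ) * b := by
          rw [hμ]
          push_cast
          rw [div_mul_eq_mul_div, eq_div_iff (by push_cast at hsr0 ⊢; exact hsr0)]
          linear_combination eq1
        have eq2' : (((s - r') * μ : ℝ) : ℂ) * b = ((((r' - t) : ℝ) : ℂ) * Complex.I) * b := by
          push_cast
          linear_combination eq2 - ((s : ℂ) - (r' : ℂ)) * ha_eq
        have eqc : (((s - r') * μ : ℝ) : ℂ) = (((r' - t) : ℝ) : ℂ) * Complex.I :=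
          mul_right_cancel₀ hb eq2'
        have him : (0 : ℝ) = r' - t := by
          have := congrArg Complex.im eqc
          simpa using this
        have hre0 : (s - r') * μ = 0 := by
          have := congrArg Complex.re eqc
          simpa using this
        have hμ0 : μ ≠ 0 := by
          intro h0
          rw [h0] at ha_eq
          simp at ha_eq
          exact ha ha_eq
        have : s = r' := by
          rcases mul_eq_zero.mp hre0 with h | h
          · linarith [sub_eq_zero.mp h]
          · exact absurd h hμ0
        linarith

theorem stmt_2 (d : ℕ) (hd : 1 ≤ d) :
    ∃ A : Matrix (Fin (d * d)) (Fin d) ℂ,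
      ∀ x y : Fin d → ℂ,
        (∀ j, csign (A.mulVec x j) = csign (A.mulVec y j)) →
          ∃ t : ℝ, 0 < t ∧ y = fun k => (t : ℂ) * x k := by
  classical
  set e : Fin d × Fin d ≃ Fin (d * d) := finProdFinEquiv with he
  refine ⟨fun j m =>
    (if m = (e.symm j).1 then (if (e.symm j).2 < (e.symm j).1 then Complex.I else 1) else 0) +
    (if m = (e.symm j).2 then (if (e.symm j).1 = (e.symm j).2 then 0 else 1) else 0), ?_⟩
  intro x y h
  have hmv : ∀ z : Fin d → ℂ, ∀ k l : Fin d,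
      Matrix.mulVec (fun j m =>
        (if m = (e.symm j).1 then (if (e.symm j).2 < (e.symm j).1 then Complex.I else 1) else 0) +
        (if m = (e.symm j).2 then (if (e.symm j).1 = (e.symm j).2 then 0 else 1) else 0))
        z (e (k, l)) =
      (if l < k then Complex.I else 1) * z k + (if k = l then 0 else 1) * z l := by
    intro z k l
    simp [Matrix.mulVec, dotProduct, add_mul, ite_mul, zero_mul,
      Finset.sum_add_distrib, Finset.sum_ite_eq', Equiv.symm_apply_apply]
  have H : ∀ k l : Fin d,
      csign ((if l < k then Complex.I else 1) * x k + (if k = l then 0 else 1) * x l) =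
      csign ((if l < k then Complex.I else 1) * y k + (if k = l then 0 else 1) * y l) := by
    intro k l
    have := h (e (k, l))
    rwa [hmv, hmv] at this
  have Hd : ∀ k : Fin d, csign (x k) = csign (y k) := by
    intro k
    have := H k k
    simpa using this
  by_cases hx : ∀ k, x k = 0
  · refine ⟨1, one_pos, funext fun k => ?_⟩
    have : y k = 0 := by
      rw [← csign_eq_zero_iff, ← Hd k, hx k, (csign_eq_zero_iff 0).mpr rfl]
    simp [this, hx k]
  · push_neg at hx
    obtain ⟨k0, hk0⟩ := hx
    obtain ⟨t, ht, hty⟩ := csign_rel hk0 (Hd k0)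
    refine ⟨t, ht, funext fun k => ?_⟩
    show y k = (t : ℂ) * x k
    by_cases hxk : x k = 0
    · have : y k = 0 := by
        rw [← csign_eq_zero_iff, ← Hd k, hxk, (csign_eq_zero_iff 0).mpr rfl]
      simp [this, hxk]
    · by_cases hkk : k = k0
      · rw [hkk]; exact hty
      · obtain ⟨u, hu, huy⟩ := csign_rel hxk (Hd k)
        have hut : u = t := by
          rcases lt_or_gt_of_ne hkk with hlt | hgt
          · -- k < k0 : a = x k, b = x k0, s = u, t = t
            have H1 : csign (x k + x k0) = csign ((u : ℂ) * x k + (t : ℂ) * x k0) := by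
              have := H k k0
              rw [if_neg (by exact asymm hlt), if_neg (Fin.ne_of_lt hlt)] at this
              simpa [huy, hty] using this
            have H2 : csign (x k + Complex.I * x k0) =
                csign ((u : ℂ) * x k + (t : ℂ) * (Complex.I * x k0)) := by
              have := H k0 k
              rw [if_pos hlt, if_neg (Ne.symm (Fin.ne_of_lt hlt))] at this
              rw [huy, hty] at this
              have h' : csign (Complex.I * x k0 + x k) =
                  csign (Complex.I * ((t : ℂ) * x k0) + (u : ℂ) * x k) := by
                simpa using this
              calc csign (x k + Complex.I * x k0) = csign (Complex.I * x k0 + x k) := by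
                    ring_nf
                _ = csign (Complex.I * ((t : ℂ) * x k0) + (u : ℂ) * x k) := h'
                _ = csign ((u : ℂ) * x k + (t : ℂ) * (Complex.I * x k0)) := by
                    ring_nf
            exact key hxk hk0 hu ht H1 H2
          · -- k0 < k : a = x k0, b = x k, s = t, t = u
            have H1 : csign (x k0 + x k) = csign ((t : ℂ) * x k0 + (u : ℂ) * x k) := by
              have := H k0 k
              rw [if_neg (by exact asymm hgt), if_neg (Fin.ne_of_lt hgt)] at this
              simpa [huy, hty] using this
            have H2 : csign (x k0 + Complex.I * x k) =
                csign ((t : ℂ) * x k0 + (u : ℂ) * (Complex.I * x k)) := by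
              have := H k k0
              rw [if_pos hgt, if_neg (Ne.symm (Fin.ne_of_lt hgt))] at this
              rw [huy, hty] at this
              have h' : csign (Complex.I * x k + x k0) =
                  csign (Complex.I * ((u : ℂ) * x k) + (t : ℂ) * x k0) := by
                simpa using this
              calc csign (x k0 + Complex.I * x k) = csign (Complex.I * x k + x k0) := by
                    ring_nf
                _ = csign (Complex.I * ((u : ℂ) * x k) + (t : ℂ) * x k0) := h'
                _ = csign ((t : ℂ) * x k0 + (u : ℂ) * (Complex.I * x k)) := by
                    ring_nf
            exact (key hk0 hxk ht hu H1 H2).symm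
        rw [huy, hut]
end

section
/- Let A ∈ ℂ^{m×d} have full column rank, x ∈ ℂ^d nonzero, with the discriminant matrix D_A(x) = [[Re A, Im A, Re(dg(Ax))], [-Im A, Re A, -Im(dg(Ax))]]. If rank(D_A(x)) ≥ 2d + m - 1, then Ax has no zero entries (|N(Ax)| = m) and x ∈ W_A. Conversely if x ∈ W_A and Ax has no zero entries then rank(D_A(x)) = 2d + m - 1. -/
def Wset {m d : ℕ} (B : Matrix (Fin m) (Fin d) ℂ) : Set (Fin d → ℂ) :=
  {x | ∀ y : Fin d → ℂ,
    (∀ j, csign (B.mulVec y j) = csign (B.mulVec x j)) →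
      ∃ t : ℝ, 0 < t ∧ x = fun k => (t : ℂ) * y k}

noncomputable def discD {m d : ℕ} (A : Matrix (Fin m) (Fin d) ℂ) (x : Fin d → ℂ) :
    Matrix (Fin m ⊕ Fin m) ((Fin d ⊕ Fin d) ⊕ Fin m) ℝ :=
  Matrix.fromBlocks
    (Matrix.fromCols (A.map Complex.re) (A.map Complex.im))
    (Matrix.diagonal fun j => (A.mulVec x j).re)
    (Matrix.fromCols (-(A.map Complex.im)) (A.map Complex.re))
    (-(Matrix.diagonal fun j => (A.mulVec x j).im))

namespace Stmt7

lemma csign_smul {t : ℝ} (ht : 0 < t) (z : ℂ) : csign ((t:ℂ) * z) = csign z := by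
  unfold csign
  rcases eq_or_ne z 0 with rfl | hz
  · simp
  · have ht' : (t:ℂ) ≠ 0 := by exact_mod_cast ht.ne'
    rw [if_neg (mul_ne_zero ht' hz), if_neg hz]
    rw [norm_mul, Complex.norm_real, Real.norm_of_nonneg ht.le]
    push_cast
    rw [mul_div_mul_left _ _ ht']

/-- if signs agree and v ≠ 0 then u is a positive real multiple of v -/
lemma csign_eq_imp {u v : ℂ} (h : csign u = csign v) (hv : v ≠ 0) :
    0 < ‖u‖ / ‖v‖ ∧
      u = ((‖u‖ / ‖v‖ : ℝ) : ℂ) * v := by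
  have hu : u ≠ 0 := by
    intro h0
    subst h0
    rw [csign, if_pos rfl, csign, if_neg hv] at h
    rw [eq_comm, div_eq_zero_iff] at h
    rcases h with h' | h'
    · exact hv h'
    · exact hv (by simpa using h')
  unfold csign at h
  rw [if_neg hu, if_neg hv] at h
  have hau : ‖u‖ ≠ 0 := by simpa using hu
  have hav : ‖v‖ ≠ 0 := by simpa using hv
  constructor
  · exact div_pos (norm_pos_iff.2 hu) (norm_pos_iff.2 hv)
  · rw [div_eq_div_iff (by exact_mod_cast hau) (by exact_mod_cast hav)] at h
    push_cast
    rw [div_mul_eq_mul_div, eq_div_iff (by exact_mod_cast hav)]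
    linear_combination h

lemma discD_ker_iff {m d : ℕ} (A : Matrix (Fin m) (Fin d) ℂ) (x : Fin d → ℂ)
    (c : ((Fin d ⊕ Fin d) ⊕ Fin m) → ℝ) :
    (discD A x).mulVec c = 0 ↔
      ∀ j, A.mulVec (fun k => (c (Sum.inl (Sum.inl k)) : ℂ)
          - Complex.I * c (Sum.inl (Sum.inr k))) j
        + (c (Sum.inr j) : ℂ) * A.mulVec x j = 0 := by
  rw [funext_iff, Sum.forall]
  have H : ∀ j, ((discD A x).mulVec c (Sum.inl j) = 0 ∧ (discD A x).mulVec c (Sum.inr j) = 0) ↔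
      (A.mulVec (fun k => (c (Sum.inl (Sum.inl k)) : ℂ)
          - Complex.I * c (Sum.inl (Sum.inr k))) j
        + (c (Sum.inr j) : ℂ) * A.mulVec x j = 0) := by
    intro j
    rw [Complex.ext_iff]
    simp only [discD, Matrix.mulVec, dotProduct, Fintype.sum_sum_type,
      Matrix.fromBlocks, Matrix.fromCols, Matrix.diagonal, Matrix.map,
      Matrix.of_apply, Sum.elim_inl, Sum.elim_inr, Matrix.neg_apply, Pi.zero_apply,
      Complex.add_re, Complex.add_im, Complex.re_sum, Complex.im_sum,
      Complex.mul_re, Complex.mul_im, Complex.sub_re, Complex.sub_im,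
      Complex.ofReal_re, Complex.ofReal_im, Complex.I_re, Complex.I_im,
      ite_mul, zero_mul, neg_zero, mul_zero, one_mul, zero_sub, sub_zero, zero_add,
      add_zero, neg_neg, mul_neg, neg_mul,
      Finset.sum_ite_eq, Finset.mem_univ, if_true, Complex.zero_re, Complex.zero_im,
      Finset.sum_sub_distrib, Finset.sum_add_distrib, Finset.sum_neg_distrib,
      Finset.sum_mul, mul_sub, mul_add, sub_mul, add_mul, Finset.mul_sum]
    ring_nf
    simp only [mul_comm, mul_left_comm, mul_assoc]
    constructor <;> rintro ⟨h1, h2⟩ <;> exact ⟨by linarith, by linarith⟩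
  rw [forall_and.symm]
  exact forall_congr' H

/-- the canonical kernel vector -/
noncomputable def e0 {m d : ℕ} (x : Fin d → ℂ) : ((Fin d ⊕ Fin d) ⊕ Fin m) → ℝ :=
  Sum.elim (Sum.elim (fun k => -(x k).re) (fun k => (x k).im)) (fun _ => 1)

lemma e0_mem {m d : ℕ} (A : Matrix (Fin m) (Fin d) ℂ) (x : Fin d → ℂ) :
    e0 (m := m) x ∈ LinearMap.ker (discD A x).mulVecLin := by
  rw [LinearMap.mem_ker, Matrix.mulVecLin_apply, discD_ker_iff]
  intro j
  have : (fun k => ((e0 (m := m) x (Sum.inl (Sum.inl k)) : ℝ) : ℂ)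
      - Complex.I * (e0 (m := m) x (Sum.inl (Sum.inr k)) : ℝ)) = fun k => -(x k) := by
    funext k
    simp [e0, Complex.ext_iff]
  rw [this]
  simp [e0, show (fun k => -x k) = -x from rfl, Matrix.mulVec_neg]

lemma e0_ne_zero {m d : ℕ} {x : Fin d → ℂ} (hx : x ≠ 0) : e0 (m := m) x ≠ 0 := by
  intro h
  apply hx
  funext k
  have h1 := congrFun h (Sum.inl (Sum.inl k))
  have h2 := congrFun h (Sum.inl (Sum.inr k))
  simp [e0] at h1 h2
  exact Complex.ext (by simpa using h1) h2

lemma rank_add_ker {m d : ℕ} (A : Matrix (Fin m) (Fin d) ℂ) (x : Fin d → ℂ) :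
    (discD A x).rank
      + Module.finrank ℝ (LinearMap.ker (discD A x).mulVecLin) = 2 * d + m := by
  rw [Matrix.rank, LinearMap.finrank_range_add_finrank_ker]
  simp [Module.finrank_pi]
  ring

end Stmt7

open Stmt7

theorem stmt_7 (m d : ℕ) (A : Matrix (Fin m) (Fin d) ℂ) (hA : A.rank = d)
    (x : Fin d → ℂ) (hx : x ≠ 0) :
    ((discD A x).rank ≥ 2 * d + m - 1 → (∀ j, A.mulVec x j ≠ 0) ∧ x ∈ Wset A) ∧
      (x ∈ Wset A → (∀ j, A.mulVec x j ≠ 0) → (discD A x).rank = 2 * d + m - 1) := by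
  classical
  obtain ⟨k0, hk0⟩ : ∃ k, x k ≠ 0 := by
    by_contra h; push_neg at h; exact hx (funext h)
  have hd : 0 < d := k0.pos
  have hadd := rank_add_ker A x
  have hspan_le : Submodule.span ℝ {e0 (m := m) x} ≤
      LinearMap.ker (discD A x).mulVecLin := by
    rw [Submodule.span_le, Set.singleton_subset_iff]
    exact e0_mem A x
  have hfrk_span : Module.finrank ℝ (Submodule.span ℝ {e0 (m := m) x}) = 1 :=
    finrank_span_singleton (e0_ne_zero hx)
  constructor
  · intro hrank
    have hker1 : Module.finrank ℝ (LinearMap.ker (discD A x).mulVecLin) ≤ 1 := by omega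
    have hker_eq : LinearMap.ker (discD A x).mulVecLin
        = Submodule.span ℝ {e0 (m := m) x} := by
      refine (Submodule.eq_of_le_of_finrank_le hspan_le ?_).symm
      rw [hfrk_span]
      exact hker1
    have hm : 0 < m := by
      have h2 := Matrix.rank_le_card_height (discD A x)
      simp [Fintype.card_sum] at h2
      omega
    have hfull : ∀ j, A.mulVec x j ≠ 0 := by
      intro j hj
      have hcj : (Sum.elim (Sum.elim (fun _ => (0:ℝ)) (fun _ => (0:ℝ)))
          (fun j' => if j' = j then (1:ℝ) else 0) : ((Fin d ⊕ Fin d) ⊕ Fin m) → ℝ)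
          ∈ LinearMap.ker (discD A x).mulVecLin := by
        rw [LinearMap.mem_ker, Matrix.mulVecLin_apply, discD_ker_iff]
        intro j'
        have hz : (fun k => (((Sum.elim (Sum.elim (fun _ => (0:ℝ)) (fun _ => (0:ℝ)))
            (fun j' => if j' = j then (1:ℝ) else 0) : ((Fin d ⊕ Fin d) ⊕ Fin m) → ℝ)
              (Sum.inl (Sum.inl k)) : ℝ) : ℂ)
            - Complex.I * (((Sum.elim (Sum.elim (fun _ => (0:ℝ)) (fun _ => (0:ℝ)))
            (fun j' => if j' = j then (1:ℝ) else 0) : ((Fin d ⊕ Fin d) ⊕ Fin m) → ℝ)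
              (Sum.inl (Sum.inr k)) : ℝ) : ℂ))
            = (0 : Fin d → ℂ) := by
          funext k; simp
        rw [hz, Matrix.mulVec_zero]
        rcases eq_or_ne j' j with rfl | hne
        · simp [hj]
        · simp [hne]
      rw [hker_eq, Submodule.mem_span_singleton] at hcj
      obtain ⟨a, ha⟩ := hcj
      have h1 := congrFun ha (Sum.inr j)
      have h2 := congrFun ha (Sum.inl (Sum.inl k0))
      have h3 := congrFun ha (Sum.inl (Sum.inr k0))
      simp [e0] at h1 h2 h3
      apply hk0
      apply Complex.ext <;> simp
      · rcases h2 with rfl | h2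
        · simp at h1
        · exact h2
      · rcases h3 with rfl | h3
        · simp at h1
        · exact h3
    refine ⟨hfull, ?_⟩
    intro y hy
    set r : Fin m → ℝ := fun j => ‖A.mulVec y j‖ / ‖A.mulVec x j‖
      with hr
    have hrj : ∀ j, 0 < r j ∧ A.mulVec y j = ((r j : ℝ) : ℂ) * A.mulVec x j :=
      fun j => csign_eq_imp (hy j) (hfull j)
    have hcv : (Sum.elim (Sum.elim (fun k => (y k).re) (fun k => -(y k).im))
          (fun j => -(r j)) : ((Fin d ⊕ Fin d) ⊕ Fin m) → ℝ)
        ∈ LinearMap.ker (discD A x).mulVecLin := by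
      rw [LinearMap.mem_ker, Matrix.mulVecLin_apply, discD_ker_iff]
      intro j
      have hzy : (fun k => (((Sum.elim (Sum.elim (fun k => (y k).re) (fun k => -(y k).im))
            (fun j => -(r j)) : ((Fin d ⊕ Fin d) ⊕ Fin m) → ℝ) (Sum.inl (Sum.inl k)) : ℝ) : ℂ)
          - Complex.I * (((Sum.elim (Sum.elim (fun k => (y k).re) (fun k => -(y k).im))
            (fun j => -(r j)) : ((Fin d ⊕ Fin d) ⊕ Fin m) → ℝ) (Sum.inl (Sum.inr k)) : ℝ) : ℂ))
          = y := by
        funext k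
        simp [Complex.ext_iff]
      rw [hzy]
      simp only [Sum.elim_inr]
      rw [(hrj j).2]
      push_cast
      ring
    rw [hker_eq, Submodule.mem_span_singleton] at hcv
    obtain ⟨a, ha⟩ := hcv
    have hj0 := congrFun ha (Sum.inr ⟨0, hm⟩)
    simp [e0] at hj0
    set ρ := r ⟨0, hm⟩ with hρdef
    have hρ : 0 < ρ := (hrj ⟨0, hm⟩).1
    have hyk : ∀ k, y k = (ρ : ℂ) * x k := by
      intro k
      have h2 := congrFun ha (Sum.inl (Sum.inl k))
      have h3 := congrFun ha (Sum.inl (Sum.inr k))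
      simp [e0] at h2 h3
      rw [hj0] at h2 h3
      apply Complex.ext
      · simp only [Complex.mul_re, Complex.ofReal_re, Complex.ofReal_im, zero_mul, sub_zero]
        linarith
      · simp only [Complex.mul_im, Complex.ofReal_re, Complex.ofReal_im, zero_mul, add_zero]
        linarith
    refine ⟨ρ⁻¹, inv_pos.2 hρ, funext fun k => ?_⟩
    rw [hyk k]
    push_cast
    rw [← mul_assoc]
    rw [inv_mul_cancel₀ (by exact_mod_cast hρ.ne'), one_mul]
  · intro hW hfull
    have hker_le : LinearMap.ker (discD A x).mulVecLin
        ≤ Submodule.span ℝ {e0 (m := m) x} := by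
      intro c hc
      rw [LinearMap.mem_ker, Matrix.mulVecLin_apply, discD_ker_iff] at hc
      set w : Fin m → ℝ := fun j => c (Sum.inr j) with hw
      set z : Fin d → ℂ := fun k => (c (Sum.inl (Sum.inl k)) : ℂ)
        - Complex.I * c (Sum.inl (Sum.inr k)) with hzdef
      have hAz : ∀ j, A.mulVec z j = -((w j : ℝ) : ℂ) * A.mulVec x j := by
        intro j
        have := hc j
        linear_combination this
      set S : ℝ := ∑ j, |w j| with hS
      have hS0 : 0 ≤ S := Finset.sum_nonneg fun j _ => abs_nonneg _
      set ε : ℝ := (1 + S)⁻¹ with hε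
      have hε0 : 0 < ε := by positivity
      have hpos : ∀ j, 0 < 1 - ε * w j := by
        intro j
        have hwj : w j ≤ S := by
          calc w j ≤ |w j| := le_abs_self _
          _ ≤ S := Finset.single_le_sum (fun i _ => abs_nonneg (w i)) (Finset.mem_univ j)
        have : ε * w j ≤ ε * S := by nlinarith
        have hlt : ε * S < 1 := by
          rw [hε, inv_mul_eq_div, div_lt_one (by linarith)]
          linarith
        linarith
      set y : Fin d → ℂ := fun k => x k + (ε : ℂ) * z k with hy
      have hAy : ∀ j, A.mulVec y j = (((1 - ε * w j : ℝ)) : ℂ) * A.mulVec x j := by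
        intro j
        have : y = x + (ε : ℂ) • z := by
          funext k; simp [hy]
        rw [this, Matrix.mulVec_add, Matrix.mulVec_smul]
        simp only [Pi.add_apply, Pi.smul_apply, smul_eq_mul]
        rw [hAz j]
        push_cast
        ring
      obtain ⟨t, ht, hxy⟩ := hW y (fun j => by rw [hAy j, csign_smul (hpos j)])
      have ht' : (t : ℂ) ≠ 0 := by exact_mod_cast ht.ne'
      have hε' : (ε : ℂ) ≠ 0 := by exact_mod_cast hε0.ne'
      set lam : ℝ := (1 - t) / (t * ε) with hlam
      have hz2 : ∀ k, z k = ((lam : ℝ) : ℂ) * x k := by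
        intro k
        have h := congrFun hxy k
        simp only [hy] at h
        have key : (t : ℂ) * ε * z k = (1 - t) * x k := by linear_combination -h
        rw [hlam]
        push_cast
        rw [div_mul_eq_mul_div, eq_div_iff (mul_ne_zero ht' hε')]
        linear_combination key
      have hAz2 : ∀ j, A.mulVec z j = ((lam : ℝ) : ℂ) * A.mulVec x j := by
        intro j
        have : z = ((lam : ℝ) : ℂ) • x := funext fun k => by
          rw [hz2 k]; rfl
        rw [this, Matrix.mulVec_smul]
        rfl
      have hwj : ∀ j, w j = -lam := by
        intro j
        have h1 := hAz j
        have h2 := hAz2 j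
        have h0 : (((lam + w j : ℝ)) : ℂ) * A.mulVec x j = 0 := by
          push_cast
          linear_combination h1 - h2
        rcases mul_eq_zero.1 h0 with h | h
        · have : (lam + w j : ℝ) = 0 := by exact_mod_cast h
          linarith
        · exact absurd h (hfull j)
      simp only [hw] at hwj
      rw [Submodule.mem_span_singleton]
      refine ⟨-lam, funext fun p => ?_⟩
      have hre : ∀ k, c (Sum.inl (Sum.inl k)) = lam * (x k).re := by
        intro k
        have h := congrArg Complex.re (hz2 k)
        simpa [hzdef] using h
      have him : ∀ k, c (Sum.inl (Sum.inr k)) = -(lam * (x k).im) := by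
        intro k
        have h := congrArg Complex.im (hz2 k)
        simp [hzdef] at h
        linarith
      rcases p with (k | k) | j
      · simp [e0, hre k]
      · simp [e0, him k]
      · simp [e0, hwj j]
    have hker_eq : LinearMap.ker (discD A x).mulVecLin
        = Submodule.span ℝ {e0 (m := m) x} := le_antisymm hker_le hspan_le
    rw [hker_eq, hfrk_span] at hadd
    omega
end

section
/- Define A₀ ∈ ℂ^{2d×d} with top block the identity I_d and bottom block i·I_d, and b₀ = (1,…,1)ᵀ ∈ ℂ^{2d}. Then sign(A₀·0 + b₀) is the all-ones vector, every entry of A₀·0 + b₀ is nonzero, and for any y ∈ ℂ^d with sign(A₀ y + b₀) = sign(b₀) one has y = 0. Hence 0 ∈ W_{A₀,b₀} with 2d affine phase-only measurements. -/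
def Waff {d : ℕ} {ι : Type*} [Fintype ι] (A : Matrix ι (Fin d) ℂ) (b : ι → ℂ) :
    Set (Fin d → ℂ) :=
  {x | ∀ y : Fin d → ℂ,
    (∀ j, csign (A.mulVec y j + b j) = csign (A.mulVec x j + b j)) → y = x}

lemma csign_one : csign 1 = 1 := by simp [csign]

lemma csign_eq_one_imp {z : ℂ} (h : csign z = 1) : z = (‖z‖ : ℂ) := by
  by_cases hz : z = 0
  · simp [csign, hz] at h
  · rw [csign, if_neg hz, div_eq_one_iff_eq (by simpa using hz)] at h
    exact h

theorem stmt_16 (d : ℕ)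
    (A₀ : Matrix (Fin d ⊕ Fin d) (Fin d) ℂ)
    (hA₀ : A₀ = Matrix.fromRows (1 : Matrix (Fin d) (Fin d) ℂ)
      (Complex.I • (1 : Matrix (Fin d) (Fin d) ℂ)))
    (b₀ : Fin d ⊕ Fin d → ℂ) (hb₀ : b₀ = fun _ => 1) :
    (∀ j, A₀.mulVec 0 j + b₀ j ≠ 0) ∧
    (∀ j, csign (A₀.mulVec 0 j + b₀ j) = 1) ∧
    (∀ y : Fin d → ℂ, (∀ j, csign (A₀.mulVec y j + b₀ j) = csign (b₀ j)) → y = 0) ∧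
    (0 : Fin d → ℂ) ∈ Waff A₀ b₀ := by
  subst hA₀ hb₀
  have hmul : ∀ y : Fin d → ℂ, ∀ k : Fin d,
      (Matrix.fromRows (1 : Matrix (Fin d) (Fin d) ℂ)
        (Complex.I • (1 : Matrix (Fin d) (Fin d) ℂ))).mulVec y (Sum.inl k) = y k ∧
      (Matrix.fromRows (1 : Matrix (Fin d) (Fin d) ℂ)
        (Complex.I • (1 : Matrix (Fin d) (Fin d) ℂ))).mulVec y (Sum.inr k) = Complex.I * y k := by
    intro y k
    constructor <;> simp [Matrix.mulVec, dotProduct, Matrix.one_apply, Finset.sum_ite_eq,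
      mul_comm]
  have key : ∀ y : Fin d → ℂ,
      (∀ j, csign ((Matrix.fromRows (1 : Matrix (Fin d) (Fin d) ℂ)
        (Complex.I • (1 : Matrix (Fin d) (Fin d) ℂ))).mulVec y j + 1) = 1) → y = 0 := by
    intro y h
    funext k
    have h1 := csign_eq_one_imp (by simpa [(hmul y k).1] using h (Sum.inl k))
    have h2 := csign_eq_one_imp (by simpa [(hmul y k).2] using h (Sum.inr k))
    have him : (y k).im = 0 := by
      have := congrArg Complex.im h1
      simpa using this
    have hre : (y k).re = 0 := by
      have := congrArg Complex.im h2
      simp [Complex.add_im, Complex.mul_im] at this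
      linarith
    exact Complex.ext hre him
  refine ⟨?_, ?_, ?_, ?_⟩
  · intro j
    cases j <;> simp [hmul]
  · intro j
    cases j <;> simp [hmul, csign_one]
  · intro y h
    exact key y (by simpa [csign_one] using h)
  · intro y h
    refine key y ?_
    intro j
    have := h j
    cases j <;> simpa [hmul, csign_one] using this
end

section
/- Fix A ∈ ℂ^{m×d} and a nonzero x ∈ ℂ^d with Ax having no zero entries. Define V_x = {λ ∈ ℝ^m : ∃ y ∈ ℂ^d, Ay = dg(sign(Ax))·λ}. Then V_x is a real subspace of ℝ^m, the vector |Ax| (entrywise modulus) lies in V_x, and dim_ℝ V_x = 2d + m - rank_ℝ([φ(A), -φ₁(dg(sign(Ax)))]), where φ(A) = [[Re A, Im A],[-Im A, Re A]] and φ₁(M) = [Re M; -Im M], provided A has full column rank. -/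
/-- `φ(A) = [[Re A, Im A], [-Im A, Re A]]`. -/
def phiMap {n₁ n₂ : ℕ} (A : Matrix (Fin n₁) (Fin n₂) ℂ) :
    Matrix (Fin n₁ ⊕ Fin n₁) (Fin n₂ ⊕ Fin n₂) ℝ :=
  Matrix.fromBlocks (A.map Complex.re) (A.map Complex.im)
    (-(A.map Complex.im)) (A.map Complex.re)

/-- `φ₁(M) = [Re M; -Im M]`. -/
def phiOne {n₁ n₂ : ℕ} (M : Matrix (Fin n₁) (Fin n₂) ℂ) :
    Matrix (Fin n₁ ⊕ Fin n₁) (Fin n₂) ℝ :=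
  Matrix.fromRows (M.map Complex.re) (-(M.map Complex.im))

theorem stmt_18 (m d : ℕ) (A : Matrix (Fin m) (Fin d) ℂ) (hA : A.rank = d)
    (x : Fin d → ℂ) (hx : x ≠ 0) (hnz : ∀ j, A.mulVec x j ≠ 0) :
    ∃ S : Submodule ℝ (Fin m → ℝ),
      (S : Set (Fin m → ℝ)) =
        {lam : Fin m → ℝ | ∃ y : Fin d → ℂ,
          A.mulVec y = fun j => csign (A.mulVec x j) * (lam j : ℂ)} ∧
      (fun j => (‖A.mulVec x j‖ : ℝ)) ∈ S ∧
      Module.finrank ℝ S =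
        2 * d + m -
          (Matrix.fromCols (phiMap A)
            (-(phiOne (Matrix.diagonal fun j => csign (A.mulVec x j))))).rank := by
  classical
  set s : Fin m → ℂ := fun j => csign (A.mulVec x j) with hs
  set B : Matrix (Fin m ⊕ Fin m) ((Fin d ⊕ Fin d) ⊕ Fin m) ℝ :=
    Matrix.fromCols (phiMap A) (-(phiOne (Matrix.diagonal s))) with hB
  set f : (((Fin d ⊕ Fin d) ⊕ Fin m) → ℝ) →ₗ[ℝ] (Fin m → ℝ) :=
    LinearMap.funLeft ℝ ℝ Sum.inr with hf
  set K := LinearMap.ker B.mulVecLin with hK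
  -- the complex vector associated to the real data
  set Y : (((Fin d ⊕ Fin d) ⊕ Fin m) → ℝ) → (Fin d → ℂ) :=
    fun w k => Complex.mk (w (Sum.inl (Sum.inl k))) (-(w (Sum.inl (Sum.inr k)))) with hY
  -- entrywise formulas
  have hBl : ∀ (w : ((Fin d ⊕ Fin d) ⊕ Fin m) → ℝ) (j : Fin m),
      B.mulVec w (Sum.inl j)
        = (∑ k, (A j k).re * w (Sum.inl (Sum.inl k))
            + ∑ k, (A j k).im * w (Sum.inl (Sum.inr k)))
          - (s j).re * w (Sum.inr j) := by
    intro w j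
    simp [hB, Matrix.mulVec, dotProduct, Fintype.sum_sum_type, Matrix.fromCols,
      phiMap, phiOne, Matrix.fromBlocks, Matrix.fromRows_apply_inl, Matrix.fromRows_apply_inr, Matrix.diagonal_apply, ite_mul,
      Finset.sum_ite_eq]
    ring
  have hBr : ∀ (w : ((Fin d ⊕ Fin d) ⊕ Fin m) → ℝ) (j : Fin m),
      B.mulVec w (Sum.inr j)
        = (-(∑ k, (A j k).im * w (Sum.inl (Sum.inl k)))
            + ∑ k, (A j k).re * w (Sum.inl (Sum.inr k)))
          + (s j).im * w (Sum.inr j) := by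
    intro w j
    simp [hB, Matrix.mulVec, dotProduct, Fintype.sum_sum_type, Matrix.fromCols,
      phiMap, phiOne, Matrix.fromBlocks, Matrix.fromRows_apply_inl, Matrix.fromRows_apply_inr, Matrix.diagonal_apply, ite_mul,
      Finset.sum_ite_eq]
  have hRe : ∀ (w : ((Fin d ⊕ Fin d) ⊕ Fin m) → ℝ) (j : Fin m),
      (A.mulVec (Y w) j).re
        = ∑ k, (A j k).re * w (Sum.inl (Sum.inl k))
            + ∑ k, (A j k).im * w (Sum.inl (Sum.inr k)) := by
    intro w j
    simp [Matrix.mulVec, dotProduct, Complex.re_sum, Complex.mul_re, hY,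
      Finset.sum_add_distrib, sub_eq_add_neg]
  have hIm : ∀ (w : ((Fin d ⊕ Fin d) ⊕ Fin m) → ℝ) (j : Fin m),
      (A.mulVec (Y w) j).im
        = ∑ k, (A j k).im * w (Sum.inl (Sum.inl k))
            - ∑ k, (A j k).re * w (Sum.inl (Sum.inr k)) := by
    intro w j
    simp [Matrix.mulVec, dotProduct, Complex.im_sum, Complex.mul_im, hY,
      Finset.sum_sub_distrib, sub_eq_add_neg, Finset.sum_add_distrib]
    ring
  have key : ∀ w : ((Fin d ⊕ Fin d) ⊕ Fin m) → ℝ,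
      B.mulVec w = 0 ↔
        A.mulVec (Y w) = fun j => s j * ((w (Sum.inr j) : ℝ) : ℂ) := by
    intro w
    rw [funext_iff, funext_iff, Sum.forall]
    constructor
    · rintro ⟨h1, h2⟩ j
      have e1 := h1 j; have e2 := h2 j
      rw [hBl] at e1; rw [hBr] at e2
      simp only [Pi.zero_apply] at e1 e2
      apply Complex.ext
      · rw [hRe]; simp [Complex.mul_re]; linarith
      · rw [hIm]; simp [Complex.mul_im]; linarith
    · intro h
      constructor <;> intro j
      · have e := congrArg Complex.re (h j)
        rw [hRe] at e
        simp only [Complex.mul_re, Complex.ofReal_re, Complex.ofReal_im, mul_zero,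
          sub_zero] at e
        rw [hBl]; simp only [Pi.zero_apply]; linarith
      · have e := congrArg Complex.im (h j)
        rw [hIm] at e
        simp only [Complex.mul_im, Complex.ofReal_re, Complex.ofReal_im, mul_zero,
          add_zero] at e
        rw [hBr]; simp only [Pi.zero_apply]; linarith
  -- set equality
  have hset : ((K.map f : Submodule ℝ (Fin m → ℝ)) : Set (Fin m → ℝ)) =
      {lam : Fin m → ℝ | ∃ y : Fin d → ℂ,
        A.mulVec y = fun j => s j * ((lam j : ℝ) : ℂ)} := by
    ext lam
    simp only [Submodule.map_coe, Set.mem_image, SetLike.mem_coe, LinearMap.mem_ker,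
      Set.mem_setOf_eq]
    constructor
    · rintro ⟨w, hw, rfl⟩
      exact ⟨Y w, by simpa [hf, LinearMap.funLeft] using (key w).mp (by simpa [hK] using hw)⟩
    · rintro ⟨y, hy⟩
      refine ⟨Sum.elim (Sum.elim (fun k => (y k).re) (fun k => -(y k).im)) lam, ?_, ?_⟩
      · show B.mulVecLin _ = 0
        rw [Matrix.mulVecLin_apply, key]
        convert hy using 2
        funext k
        apply Complex.ext <;> simp [hY]
        rfl
      · rfl
  refine ⟨K.map f, hset, ?_, ?_⟩
  · rw [← SetLike.mem_coe, hset]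
    refine ⟨x, ?_⟩
    funext j
    have h0 := hnz j
    rw [hs]
    simp only [csign, if_neg h0]
    have habs : ((‖A.mulVec x j‖ : ℝ) : ℂ) ≠ 0 := by
      simpa using h0
    rw [div_mul_cancel₀ _ habs]
  · -- dimension count
    have hAker : LinearMap.ker A.mulVecLin = ⊥ := by
      have hrn := A.mulVecLin.finrank_range_add_finrank_ker
      rw [show Module.finrank ℂ (LinearMap.range A.mulVecLin) = A.rank from rfl, hA,
        Module.finrank_pi] at hrn
      have : Module.finrank ℂ (LinearMap.ker A.mulVecLin) = 0 := by
        simpa using hrn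
      exact Submodule.finrank_eq_zero.mp this
    -- f restricted to K is injective
    have hinj : LinearMap.ker (f.comp K.subtype) = ⊥ := by
      rw [LinearMap.ker_eq_bot']
      rintro ⟨w, hw⟩ h0
      have hw' := (key w).mp (by simpa [hK] using hw)
      have hz : ∀ j, w (Sum.inr j) = 0 := by
        intro j
        have := congrFun h0 j
        simpa [hf, LinearMap.funLeft] using this
      have hAy0 : A.mulVec (Y w) = 0 := by
        rw [hw']
        funext j
        simp [hz j]
      have hY0 : Y w = 0 :=
        Matrix.ker_mulVecLin_eq_bot_iff.mp hAker (Y w) hAy0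
      ext1
      funext i
      rcases i with (k | k) | j
      · have h2 := congrArg Complex.re (congrFun hY0 k)
        simpa [hY] using h2
      · have h2 := congrArg Complex.im (congrFun hY0 k)
        simp only [hY, Pi.zero_apply, Complex.zero_im] at h2
        simpa using h2
      · exact hz j
    have hdim1 : Module.finrank ℝ (K.map f) = Module.finrank ℝ K := by
      have h1 := (f.comp K.subtype).finrank_range_add_finrank_ker
      rw [hinj, finrank_bot, add_zero] at h1
      rw [← h1, LinearMap.range_comp, Submodule.range_subtype]
    have hdim2 : B.rank + Module.finrank ℝ K = 2 * d + m := by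
      have h2 := B.mulVecLin.finrank_range_add_finrank_ker
      rw [show Module.finrank ℝ (LinearMap.range B.mulVecLin) = B.rank from rfl,
        Module.finrank_pi] at h2
      simpa [Fintype.card_sum, two_mul] using h2
    rw [hdim1]
    omega
end
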